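/- For every coin sequence ε : ℕ → {-1,+1} and every n ∈ ℕ: |ℓ_n(e) - ℓ_n(e+1)| = 1 for every e ∈ ℤ + 1/2 with e ≠ X_n - 1/2, and ℓ_n(X_n - 1/2) - ℓ_n(X_n + 1/2) ∈ {-2, 0, 2}. -/
import Mathlib


open MeasureTheory Filter

/-- Initial local time: edge `i` denotes the half-integer edge `i + 1/2`
joining `i` and `i+1`; `aInit i = a(i + 1/2)`, which is `0` if `|i+1/2| - 1/2`
is even and `-1` if it is odd. -/
def aInit (i : ℤ) : ℤ := if Even (if 0 ≤ i then i else -i - 1) then 0 else -1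

/-- State of the self-repelling walk: current position, edge local times
(`loc i` is the local time of the edge joining `i` and `i+1`, i.e. of the
half-integer edge `i + 1/2`), and the number of coins used so far. -/
structure SRWState where
  pos : ℤ
  loc : ℤ → ℤ
  coins : ℕ

/-- One step of the self-repelling walk driven by the coin sequence `ε`. -/
def srwStep (ε : ℕ → ℤ) (s : SRWState) : SRWState :=
  let lm := s.loc (s.pos - 1)   -- ℓ_n⁻ = ℓ_n(X_n - 1/2)
  let lp := s.loc s.pos         -- ℓ_n⁺ = ℓ_n(X_n + 1/2)
  let next : ℤ := if lp < lm then s.pos + 1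
    else if lm < lp then s.pos - 1
    else s.pos + ε s.coins
  { pos := next
    loc := fun i => if i = min s.pos next then s.loc i + 1 else s.loc i
    coins := if lm = lp then s.coins + 1 else s.coins }

/-- The self-repelling walk: state after `n` steps. -/
def srw (ε : ℕ → ℤ) : ℕ → SRWState
  | 0 => ⟨0, aInit, 0⟩
  | n + 1 => srwStep ε (srw ε n)

/-- Position `X_n` of the self-repelling walk. -/
def Xwalk (ε : ℕ → ℤ) (n : ℕ) : ℤ := (srw ε n).pos

/-- Edge local time `ℓ_n(i + 1/2)`. -/
def ellEdge (ε : ℕ → ℤ) (n : ℕ) (i : ℤ) : ℤ := (srw ε n).loc i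

/-- `ℓ_n⁻ = ℓ_n(X_n - 1/2)`. -/
def ellMinus (ε : ℕ → ℤ) (n : ℕ) : ℤ := ellEdge ε n (Xwalk ε n - 1)

/-- `ℓ_n⁺ = ℓ_n(X_n + 1/2)`. -/
def ellPlus (ε : ℕ → ℤ) (n : ℕ) : ℤ := ellEdge ε n (Xwalk ε n)

/-- `n` is an equality time: `ℓ_n⁻ = ℓ_n⁺`. -/
def IsEqTime (ε : ℕ → ℤ) (n : ℕ) : Prop := ellMinus ε n = ellPlus ε n

/-- `N(k)`: the `(k+1)`-st smallest equality time. -/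
noncomputable def timeN (ε : ℕ → ℤ) (k : ℕ) : ℕ := Nat.nth (IsEqTime ε) k

/-- `H_n = (ℓ_n⁻ + ℓ_n⁺)/2`. -/
def Hheight (ε : ℕ → ℤ) (n : ℕ) : ℤ := (ellMinus ε n + ellPlus ε n) / 2

/-- `ã(x)`: `0` for even `x`, `-1` for odd `x`. -/
def aTilde (x : ℤ) : ℤ := if Even x then 0 else -1

/-- Modified local time `ℓ~_n(x)`: equals `ℓ_n(x - 1/2)` for `x ≤ X_n` and
`ℓ_n(x + 1/2)` for `x > X_n`. -/
def modLoc (ε : ℕ → ℤ) (n : ℕ) (x : ℤ) : ℤ :=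
  if x ≤ Xwalk ε n then ellEdge ε n (x - 1) else ellEdge ε n x

/-- Area `𝒜(f) = Σ_x (f(x) - ã(x))` between `f` and `ã`. -/
noncomputable def areaA (f : ℤ → ℤ) : ℤ := ∑ᶠ x : ℤ, (f x - aTilde x)

/-- `m₋(f) = 1 + max {x ≤ 0 : f x = -1}`. -/
noncomputable def mMinus (f : ℤ → ℤ) : ℤ := 1 + sSup {x : ℤ | x ≤ 0 ∧ f x = -1}

/-- `m₊(f) = -1 + min {x ≥ 0 : f x = -1}`. -/
noncomputable def mPlus (f : ℤ → ℤ) : ℤ := -1 + sInf {x : ℤ | 0 ≤ x ∧ f x = -1}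

/-- `O(f)`: the number of zeros of `f` strictly between `m₋(f)` and `m₊(f)`. -/
noncomputable def nZeros (f : ℤ → ℤ) : ℕ :=
  {x : ℤ | mMinus f < x ∧ x < mPlus f ∧ f x = 0}.ncard

/-- `o₊ = max {x < m₊(f) : f x = 0}`. -/
noncomputable def oPlus (f : ℤ → ℤ) : ℤ := sSup {x : ℤ | x < mPlus f ∧ f x = 0}

/-- `o₋ = min {x > m₋(f) : f x = 0}`. -/
noncomputable def oMinus (f : ℤ → ℤ) : ℤ := sInf {x : ℤ | mMinus f < x ∧ f x = 0}

open Classical in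
/-- The admissible interval `I(f)`. -/
noncomputable def interI (f : ℤ → ℤ) : Set ℤ :=
  if f = aTilde then {0}
  else if nZeros f = 0 then Set.Icc (mMinus f) (mPlus f)
  else if 0 < oPlus f then Set.Ioc (oPlus f) (mPlus f)
  else Set.Ico (mMinus f) (oMinus f)

/-- Coins as `±1`-valued integers from booleans. -/
def coin (ω : ℕ → Bool) (j : ℕ) : ℤ := if ω j then 1 else -1


lemma abs_one_iff' (x : ℤ) : |x| = 1 ↔ x = 1 ∨ x = -1 := abs_eq (by norm_num)

lemma right_inv (s t : SRWState) (hpos : t.pos = s.pos + 1)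
    (hloc : ∀ i, t.loc i = if i = s.pos then s.loc i + 1 else s.loc i)
    (H1 : ∀ i : ℤ, i ≠ s.pos - 1 → |s.loc i - s.loc (i + 1)| = 1)
    (h : s.loc (s.pos - 1) - s.loc s.pos = 0 ∨ s.loc (s.pos - 1) - s.loc s.pos = 2) :
    (∀ i : ℤ, i ≠ t.pos - 1 → |t.loc i - t.loc (i + 1)| = 1) ∧
    (t.loc (t.pos - 1) - t.loc t.pos = -2 ∨ t.loc (t.pos - 1) - t.loc t.pos = 0 ∨
      t.loc (t.pos - 1) - t.loc t.pos = 2) := by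
  constructor
  · intro i hi
    rw [hpos] at hi
    rw [hloc, hloc]
    by_cases h1 : i + 1 = s.pos
    · rw [if_neg (by omega : ¬ i = s.pos), if_pos h1, abs_one_iff', h1,
        (by omega : i = s.pos - 1)]
      omega
    · rw [if_neg (by omega : ¬ i = s.pos), if_neg h1]
      exact H1 i (by omega)
  · rw [hpos, (by omega : s.pos + 1 - 1 = s.pos), hloc, hloc, if_pos rfl,
      if_neg (by omega : ¬ s.pos + 1 = s.pos)]
    have := H1 s.pos (by omega)
    rw [abs_one_iff'] at this
    omega

lemma left_inv (s t : SRWState) (hpos : t.pos = s.pos - 1)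
    (hloc : ∀ i, t.loc i = if i = s.pos - 1 then s.loc i + 1 else s.loc i)
    (H1 : ∀ i : ℤ, i ≠ s.pos - 1 → |s.loc i - s.loc (i + 1)| = 1)
    (h : s.loc (s.pos - 1) - s.loc s.pos = 0 ∨ s.loc (s.pos - 1) - s.loc s.pos = -2) :
    (∀ i : ℤ, i ≠ t.pos - 1 → |t.loc i - t.loc (i + 1)| = 1) ∧
    (t.loc (t.pos - 1) - t.loc t.pos = -2 ∨ t.loc (t.pos - 1) - t.loc t.pos = 0 ∨
      t.loc (t.pos - 1) - t.loc t.pos = 2) := by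
  constructor
  · intro i hi
    rw [hpos] at hi
    rw [hloc, hloc]
    by_cases h1 : i = s.pos - 1
    · rw [if_pos h1, if_neg (by omega : ¬ i + 1 = s.pos - 1), abs_one_iff', h1,
        (by omega : s.pos - 1 + 1 = s.pos)]
      omega
    · rw [if_neg h1, if_neg (by omega : ¬ i + 1 = s.pos - 1)]
      exact H1 i h1
  · rw [hpos, (by omega : s.pos - 1 - 1 = s.pos - 2), hloc, hloc,
      if_neg (by omega : ¬ s.pos - 2 = s.pos - 1), if_pos rfl]
    have := H1 (s.pos - 2) (by omega)
    rw [abs_one_iff', (by omega : s.pos - 2 + 1 = s.pos - 1)] at this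
    omega

lemma step_inv (ε : ℕ → ℤ) (hε : ∀ j, ε j = 1 ∨ ε j = -1) (s : SRWState)
    (H1 : ∀ i : ℤ, i ≠ s.pos - 1 → |s.loc i - s.loc (i + 1)| = 1)
    (H2 : s.loc (s.pos - 1) - s.loc s.pos = -2 ∨ s.loc (s.pos - 1) - s.loc s.pos = 0 ∨
      s.loc (s.pos - 1) - s.loc s.pos = 2) :
    (∀ i : ℤ, i ≠ (srwStep ε s).pos - 1 →
      |(srwStep ε s).loc i - (srwStep ε s).loc (i + 1)| = 1) ∧
    ((srwStep ε s).loc ((srwStep ε s).pos - 1) - (srwStep ε s).loc (srwStep ε s).pos = -2 ∨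
     (srwStep ε s).loc ((srwStep ε s).pos - 1) - (srwStep ε s).loc (srwStep ε s).pos = 0 ∨
     (srwStep ε s).loc ((srwStep ε s).pos - 1) - (srwStep ε s).loc (srwStep ε s).pos = 2) := by
  rcases lt_trichotomy (s.loc s.pos) (s.loc (s.pos - 1)) with hlt | heq | hgt
  · refine right_inv s _ ?_ ?_ H1 (by omega)
    · simp [srwStep, hlt]
    · intro i
      simp [srwStep, hlt, min_eq_left (by omega : s.pos ≤ s.pos + 1)]
  · rcases hε s.coins with he | he
    · refine right_inv s _ ?_ ?_ H1 (by omega)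
      · simp [srwStep, heq, he]
      · intro i
        simp [srwStep, heq, he, min_eq_left (by omega : s.pos ≤ s.pos + 1)]
    · refine left_inv s _ ?_ ?_ H1 (by omega)
      · simp [srwStep, heq, he, (by ring : s.pos + (-1 : ℤ) = s.pos - 1)]
      · intro i
        simp [srwStep, heq, he, (by ring : s.pos + (-1 : ℤ) = s.pos - 1),
          min_eq_right (by omega : s.pos - 1 ≤ s.pos)]
  · refine left_inv s _ ?_ ?_ H1 (by omega)
    · simp [srwStep, hgt, not_lt.mpr (le_of_lt hgt)]
    · intro i
      simp [srwStep, hgt, not_lt.mpr (le_of_lt hgt),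
        min_eq_right (by omega : s.pos - 1 ≤ s.pos)]

/-- for every `n`, `|ℓ_n(e) - ℓ_n(e+1)| = 1` for every edge
`e = i + 1/2` with `e ≠ X_n - 1/2`, and `ℓ_n(X_n - 1/2) - ℓ_n(X_n + 1/2) ∈ {-2,0,2}`. -/
theorem statement5 (ε : ℕ → ℤ) (hε : ∀ j, ε j = 1 ∨ ε j = -1) (n : ℕ) :
    (∀ i : ℤ, i ≠ Xwalk ε n - 1 → |ellEdge ε n i - ellEdge ε n (i + 1)| = 1) ∧
      (ellMinus ε n - ellPlus ε n = -2 ∨ ellMinus ε n - ellPlus ε n = 0 ∨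
        ellMinus ε n - ellPlus ε n = 2) := by
  induction n with
  | zero =>
    constructor
    · intro i hi
      have hi' : i ≠ -1 := by simpa [Xwalk, srw] using hi
      have h : ellEdge ε 0 i - ellEdge ε 0 (i + 1) = 1 ∨
          ellEdge ε 0 i - ellEdge ε 0 (i + 1) = -1 := by
        simp only [ellEdge, srw, aInit, Int.even_iff]
        split_ifs <;> omega
      rcases h with h | h <;> simp [h]
    · right; left
      simp only [ellMinus, ellPlus, ellEdge, Xwalk, srw]
      norm_num [aInit]
  | succ n ih =>
    exact step_inv ε hε (srw ε n) ih.1 ih.2
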